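/- Let U ⊆ V be compact convex subsets of ℝ^{n+1} and let Ω₁, Ω₂ be closed sets with U ⊆ Ωᵢ ⊆ V for i = 1,2. Then d_H(Ω₁, Ω₂) ≤ d_H(U, V) and d_H(∂Ω₁, ∂Ω₂) ≤ d_H(U, V). -/

import Mathlib

open Set Metric RealInnerProductSpace

/-- A preconnected set meeting both a set and its complement meets the frontier. -/
lemma aux_cross {E : Type*} [TopologicalSpace E] {s t : Set E} (hs : IsPreconnected s)
    (h1 : (s ∩ t).Nonempty) (h2 : (s \ t).Nonempty) : (s ∩ frontier t).Nonempty := by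
  by_contra h
  rw [Set.not_nonempty_iff_eq_empty] at h
  have hsub : s ⊆ interior t ∪ (closure t)ᶜ := by
    intro z hz
    have hz' : z ∉ frontier t := fun hf => (Set.eq_empty_iff_forall_notMem.1 h z) ⟨hz, hf⟩
    by_cases hc : z ∈ closure t
    · left
      by_contra hi
      exact hz' ⟨hc, hi⟩
    · right; exact hc
  have hdisj : s ∩ (interior t ∩ (closure t)ᶜ) = ∅ := by
    ext z
    simp only [Set.mem_inter_iff, Set.mem_compl_iff, Set.mem_empty_iff_false, iff_false]
    rintro ⟨-, hi, hc⟩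
    exact hc (interior_subset_closure hi)
  rcases (isPreconnected_iff_subset_of_disjoint.1 hs) _ _ isOpen_interior
      (isClosed_closure.isOpen_compl) hsub hdisj with h' | h'
  · obtain ⟨y, hys, hyt⟩ := h2
    exact hyt (interior_subset (h' hys))
  · obtain ⟨x, hxs, hxt⟩ := h1
    exact (h' hxs) (subset_closure hxt)

/-- If `x ∈ t` and `y ∉ t`, then the frontier of `t` is within `dist x y` of `x`. -/
lemma aux_seg {E : Type*} [NormedAddCommGroup E] [NormedSpace ℝ E] {t : Set E} {x y : E}
    (hx : x ∈ t) (hy : y ∉ t) : infDist x (frontier t) ≤ dist x y := by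
  obtain ⟨z, hzs, hzf⟩ := aux_cross (convex_segment x y).isPreconnected
    ⟨x, left_mem_segment ℝ x y, hx⟩ ⟨y, right_mem_segment ℝ x y, hy⟩
  calc infDist x (frontier t) ≤ dist x z := infDist_le_dist_of_mem hzf
    _ ≤ dist x y := by
        obtain ⟨a, b, ha, hb, hab, rfl⟩ := hzs
        have h1 : x - (a • x + b • y) = b • (x - y) := by
          rw [smul_sub]
          nth_rewrite 1 [← one_smul ℝ x]
          rw [← hab, add_smul]
          abel
        rw [dist_eq_norm, dist_eq_norm, h1, norm_smul]
        calc ‖b‖ * ‖x - y‖ ≤ 1 * ‖x - y‖ := by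
              apply mul_le_mul_of_nonneg_right _ (norm_nonneg _)
              rw [Real.norm_of_nonneg hb]; linarith
          _ = ‖x - y‖ := one_mul _

/-- Key step: each point of the frontier of a squeezed set is within `d_H(U,V)` of the
frontier of the other squeezed set. -/
lemma aux_key (n : ℕ) (U V Ω₁ Ω₂ : Set (EuclideanSpace ℝ (Fin (n + 1))))
    (hUcpt : IsCompact U) (hVcpt : IsCompact V)
    (hUconv : Convex ℝ U)
    (hUint : (interior U).Nonempty)
    (hUV : U ⊆ V)
    (h₁ : IsClosed Ω₁) (h₂ : IsClosed Ω₂)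
    (hU₁ : U ⊆ Ω₁) (h₁V : Ω₁ ⊆ V) (hU₂ : U ⊆ Ω₂) (h₂V : Ω₂ ⊆ V)
    {x : EuclideanSpace ℝ (Fin (n + 1))} (hx : x ∈ frontier Ω₁) :
    infDist x (frontier Ω₂) ≤ hausdorffDist U V := by
  have hU_ne : U.Nonempty := hUint.mono interior_subset
  have hV_ne : V.Nonempty := hU_ne.mono hUV
  have hfin : EMetric.hausdorffEdist V U ≠ ⊤ :=
    hausdorffEdist_ne_top_of_nonempty_of_bounded hV_ne hU_ne hVcpt.isBounded hUcpt.isBounded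
  have key : ∀ z ∈ V, infDist z U ≤ hausdorffDist U V := by
    intro z hz
    rw [hausdorffDist_comm]
    exact infDist_le_hausdorffDist_of_mem hz hfin
  have hd0 : (0:ℝ) ≤ hausdorffDist U V := hausdorffDist_nonneg
  rw [h₁.frontier_eq] at hx
  obtain ⟨hxΩ, hxint⟩ := hx
  have hxV : x ∈ V := h₁V hxΩ
  have hxiU : x ∉ interior U := fun h => hxint (interior_mono hU₁ h)
  by_cases hxΩ₂ : x ∈ Ω₂
  · -- separation argument
    obtain ⟨f, hf⟩ := geometric_hahn_banach_open_point (hUconv.interior) isOpen_interior hxiU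
    obtain ⟨a, ha⟩ := hUint
    have hcl : U ⊆ closure (interior U) := by
      intro u hu
      rw [Metric.mem_closure_iff]
      intro ε hε
      set s : ℝ := min 1 (ε / (‖u - a‖ + 1)) with hs
      have hden : (0:ℝ) < ‖u - a‖ + 1 := by positivity
      have hs0 : 0 < s := lt_min one_pos (by positivity)
      have hs1 : s ≤ 1 := min_le_left _ _
      refine ⟨s • a + (1 - s) • u, hUconv.combo_interior_closure_mem_interior ha
        (subset_closure hu) hs0 (by linarith) (by ring), ?_⟩
      have he : u - (s • a + (1 - s) • u) = s • (u - a) := by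
        rw [smul_sub, sub_smul, one_smul]
        abel
      rw [dist_eq_norm, he, norm_smul, Real.norm_of_nonneg hs0.le]
      calc s * ‖u - a‖ ≤ ε / (‖u - a‖ + 1) * ‖u - a‖ :=
            mul_le_mul_of_nonneg_right (min_le_right _ _) (norm_nonneg _)
        _ < ε := by
            rw [div_mul_eq_mul_div, div_lt_iff₀ hden]
            nlinarith [norm_nonneg (u - a)]
    have hfU : ∀ u ∈ U, f u ≤ f x := by
      intro u hu
      have h1 : u ∈ closure {y | f y ≤ f x} :=
        closure_mono (fun y hy => le_of_lt (hf y hy)) (hcl hu)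
      have hcl2 : IsClosed {y : EuclideanSpace ℝ (Fin (n + 1)) | f y ≤ f x} :=
        isClosed_le f.continuous continuous_const
      exact hcl2.closure_subset h1
    have hfne : f ≠ 0 := by
      intro h0
      exact absurd (hf a ha) (by simp [h0])
    set v : EuclideanSpace ℝ (Fin (n + 1)) :=
      (InnerProductSpace.toDual ℝ (EuclideanSpace ℝ (Fin (n + 1)))).symm f with hv
    have hvf : ∀ y : EuclideanSpace ℝ (Fin (n + 1)), ⟪v, y⟫ = f y := fun y =>
      InnerProductSpace.toDual_symm_apply
    have hvne : v ≠ 0 := by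
      intro h0
      apply hfne
      ext y
      have h1 := hvf y
      rw [h0, inner_zero_left] at h1
      simp [← h1]
    have hvpos : (0:ℝ) < ‖v‖ := norm_pos_iff.2 hvne
    refine le_of_forall_gt_imp_ge_of_dense fun t ht => ?_
    have ht0 : 0 < t := lt_of_le_of_lt hd0 ht
    set z : EuclideanSpace ℝ (Fin (n + 1)) := x + (t / ‖v‖) • v with hz
    have hzU : ∀ u ∈ U, t ≤ dist z u := by
      intro u hu
      have h1 : ⟪v, z - u⟫ = (f x - f u) + t * ‖v‖ := by
        have he : z - u = (x - u) + (t / ‖v‖) • v := by rw [hz]; abel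
        rw [he, inner_add_right, real_inner_smul_right, real_inner_self_eq_norm_sq,
          hvf (x - u), map_sub]
        have : t / ‖v‖ * ‖v‖ ^ 2 = t * ‖v‖ := by
          field_simp
          try ring
        rw [this]
      have h2 : t * ‖v‖ ≤ ⟪v, z - u⟫ := by
        rw [h1]
        have := hfU u hu
        nlinarith
      have h3 : ⟪v, z - u⟫ ≤ ‖v‖ * ‖z - u‖ := real_inner_le_norm v (z - u)
      rw [dist_eq_norm]
      nlinarith
    have hzV : z ∉ V := by
      intro hzV
      have h1 := key z hzV
      obtain ⟨u, hu, hud⟩ := hUcpt.exists_infDist_eq_dist hU_ne z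
      have := hzU u hu
      rw [hud] at h1
      linarith
    have hzΩ₂ : z ∉ Ω₂ := fun h => hzV (h₂V h)
    calc infDist x (frontier Ω₂) ≤ dist x z := aux_seg hxΩ₂ hzΩ₂
      _ = t := by
          rw [hz, dist_eq_norm]
          simp only [sub_add_cancel_left, add_sub_cancel_left, norm_neg, norm_smul]
          rw [Real.norm_of_nonneg (by positivity : (0:ℝ) ≤ t / ‖v‖),
            div_mul_cancel₀ _ (ne_of_gt hvpos)]
  · -- x ∉ Ω₂: connect x to the nearest point of U
    obtain ⟨u, hu, hud⟩ := hUcpt.exists_infDist_eq_dist hU_ne x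
    have huΩ₂ : u ∈ Ω₂ := hU₂ hu
    have h1 : infDist x (frontier Ω₂ᶜ) ≤ dist x u :=
      aux_seg (t := Ω₂ᶜ) hxΩ₂ (by simpa using huΩ₂)
    rw [frontier_compl] at h1
    calc infDist x (frontier Ω₂) ≤ dist x u := h1
      _ = infDist x U := hud.symm
      _ ≤ hausdorffDist U V := key x hxV

/-- If `U ⊆ Ωᵢ ⊆ V` with `U`, `V` compact convex, then the Hausdorff distances of the
sets `Ω₁, Ω₂` and of their boundaries are bounded by `d_H(U,V)`. -/
theorem hausdorff_dist_squeezed_sets (n : ℕ)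
    (U V Ω₁ Ω₂ : Set (EuclideanSpace ℝ (Fin (n + 1))))
    (hUcpt : IsCompact U) (hVcpt : IsCompact V)
    (hUconv : Convex ℝ U) (hVconv : Convex ℝ V)
    (hUint : (interior U).Nonempty) (hVint : (interior V).Nonempty)
    (hUV : U ⊆ V)
    (h₁ : IsClosed Ω₁) (h₂ : IsClosed Ω₂)
    (hU₁ : U ⊆ Ω₁) (h₁V : Ω₁ ⊆ V) (hU₂ : U ⊆ Ω₂) (h₂V : Ω₂ ⊆ V) :
    hausdorffDist Ω₁ Ω₂ ≤ hausdorffDist U V ∧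
    hausdorffDist (frontier Ω₁) (frontier Ω₂) ≤ hausdorffDist U V := by
  have hU_ne : U.Nonempty := hUint.mono interior_subset
  have hV_ne : V.Nonempty := hU_ne.mono hUV
  have hfin : EMetric.hausdorffEdist V U ≠ ⊤ :=
    hausdorffEdist_ne_top_of_nonempty_of_bounded hV_ne hU_ne hVcpt.isBounded hUcpt.isBounded
  have key : ∀ z ∈ V, infDist z U ≤ hausdorffDist U V := by
    intro z hz
    rw [hausdorffDist_comm]
    exact infDist_le_hausdorffDist_of_mem hz hfin
  have hd0 : (0:ℝ) ≤ hausdorffDist U V := hausdorffDist_nonneg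
  constructor
  · apply hausdorffDist_le_of_infDist hd0
    · intro x hx
      exact le_trans (infDist_le_infDist_of_subset hU₂ hU_ne) (key x (h₁V hx))
    · intro x hx
      exact le_trans (infDist_le_infDist_of_subset hU₁ hU_ne) (key x (h₂V hx))
  · apply hausdorffDist_le_of_infDist hd0
    · intro x hx
      exact aux_key n U V Ω₁ Ω₂ hUcpt hVcpt hUconv hUint hUV h₁ h₂ hU₁ h₁V hU₂ h₂V hx
    · intro x hx
      exact aux_key n U V Ω₂ Ω₁ hUcpt hVcpt hUconv hUint hUV h₂ h₁ hU₂ h₂V hU₁ h₁V hx
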